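/- If a real number C satisfies γ(a, |C/b|^{1/a}) = Sgn(C)·((k₂ − k₁)/(k₁ + k₂))·Γ(a), then the minimized expected loss satisfies ∫_{-∞}^{∞} L(z + C)·f(z) dz = ((k₁ + k₂)·b / (2·Γ(a)))·Γ-upper(2a, |C/b|^{1/a}). -/

import Mathlib

open Real MeasureTheory Filter

/-- The asymmetric loss function. -/
noncomputable def asymLoss (k₁ k₂ z : ℝ) : ℝ := if 0 ≤ z then k₁ * z else -k₂ * z

/-- The generalized Gaussian density with mean zero. -/
noncomputable def genGauss (a b z : ℝ) : ℝ :=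
  (2 * a * b * Real.Gamma a)⁻¹ * Real.exp (-(|z / b| ^ (1 / a)))

/-- The lower incomplete gamma function. -/
noncomputable def lowerGamma (p x : ℝ) : ℝ := ∫ t in (0:ℝ)..x, t ^ (p - 1) * Real.exp (-t)

/-- The upper incomplete gamma function. -/
noncomputable def upperGamma (p x : ℝ) : ℝ := ∫ t in Set.Ioi x, t ^ (p - 1) * Real.exp (-t)

/-- The sign function used in the paper: `1` for `c ≥ 0`, `-1` for `c < 0`. -/
noncomputable def Sgn (c : ℝ) : ℝ := if 0 ≤ c then 1 else -1

lemma gg_image_Ioi {a b x : ℝ} (ha : 0 < a) (hb : 0 < b) (hx : 0 ≤ x) :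
    (fun t : ℝ => b * t ^ a) '' Set.Ioi x = Set.Ioi (b * x ^ a) := by
  ext v
  constructor
  · rintro ⟨t, ht, rfl⟩
    exact mul_lt_mul_of_pos_left (Real.rpow_lt_rpow hx ht ha) hb
  · intro hv
    have hv' : b * x ^ a < v := hv
    have hxa : (0:ℝ) ≤ x ^ a := Real.rpow_nonneg hx a
    have h1 : x ^ a < v / b := (lt_div_iff₀ hb).mpr (by linarith [mul_comm b (x ^ a)])
    have hvb : 0 ≤ v / b := le_of_lt (lt_of_le_of_lt hxa h1)
    refine ⟨(v / b) ^ (1 / a), ?_, ?_⟩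
    · have h2 : (x ^ a) ^ (1/a) < (v / b) ^ (1/a) :=
        Real.rpow_lt_rpow hxa h1 (by positivity)
      rwa [← Real.rpow_mul hx, mul_one_div, div_self ha.ne', Real.rpow_one] at h2
    · show b * ((v / b) ^ (1/a)) ^ a = v
      rw [← Real.rpow_mul hvb, one_div_mul_cancel ha.ne', Real.rpow_one, mul_comm,
        div_mul_cancel₀ _ hb.ne']

lemma gg_strictMono {a b x : ℝ} (ha : 0 < a) (hb : 0 < b) (hx : 0 ≤ x) :
    Set.InjOn (fun t : ℝ => b * t ^ a) (Set.Ioi x) := by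
  have : StrictMonoOn (fun t : ℝ => b * t ^ a) (Set.Ioi x) := fun t₁ h₁ _ _ hlt =>
    mul_lt_mul_of_pos_left (Real.rpow_lt_rpow (hx.trans (le_of_lt h₁)) hlt ha) hb
  exact this.injOn

lemma gg_deriv {a b x : ℝ} (ha : 0 < a) (hx : 0 ≤ x) :
    ∀ t ∈ Set.Ioi x, HasDerivWithinAt (fun t : ℝ => b * t ^ a)
      (b * (a * t ^ (a - 1))) (Set.Ioi x) t := fun t ht =>
  ((Real.hasDerivAt_rpow_const (Or.inl (lt_of_le_of_lt hx ht).ne')).const_mul b).hasDerivWithinAt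

lemma gg_cov {a b x : ℝ} (ha : 0 < a) (hb : 0 < b) (hx : 0 ≤ x) (g : ℝ → ℝ) :
    ∫ v in Set.Ioi (b * x ^ a), g v
      = ∫ t in Set.Ioi x, (a * b * t ^ (a - 1)) * g (b * t ^ a) := by
  rw [← gg_image_Ioi ha hb hx,
    integral_image_eq_integral_abs_deriv_smul measurableSet_Ioi (gg_deriv ha hx)
      (gg_strictMono ha hb hx)]
  refine setIntegral_congr_fun measurableSet_Ioi fun t ht => ?_
  have ht0 : 0 < t := lt_of_le_of_lt hx ht
  have habs : |b * (a * t ^ (a - 1))| = a * b * t ^ (a - 1) := by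
    rw [abs_of_nonneg (by positivity)]; ring
  rw [smul_eq_mul, habs]

lemma gg_cov_integrable {a b x : ℝ} (ha : 0 < a) (hb : 0 < b) (hx : 0 ≤ x) (g : ℝ → ℝ)
    (h : IntegrableOn (fun t => (a * b * t ^ (a - 1)) * g (b * t ^ a)) (Set.Ioi x)) :
    IntegrableOn g (Set.Ioi (b * x ^ a)) := by
  rw [← gg_image_Ioi ha hb hx,
    integrableOn_image_iff_integrableOn_abs_deriv_smul measurableSet_Ioi (gg_deriv ha hx)
      (gg_strictMono ha hb hx)]
  refine h.congr_fun (fun t ht => ?_) measurableSet_Ioi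
  have ht0 : 0 < t := lt_of_le_of_lt hx ht
  have habs : |b * (a * t ^ (a - 1))| = a * b * t ^ (a - 1) := by
    rw [abs_of_nonneg (by positivity)]; ring
  rw [smul_eq_mul, habs]

lemma upperGamma_integrableOn {p x : ℝ} (hp : 0 < p) (hx : 0 ≤ x) :
    IntegrableOn (fun t : ℝ => t ^ (p - 1) * Real.exp (-t)) (Set.Ioi x) :=
  ((Real.GammaIntegral_convergent hp).mono_set (Set.Ioi_subset_Ioi hx)).congr_fun
    (fun t _ => mul_comm _ _) measurableSet_Ioi

lemma gamma_split {p x : ℝ} (hp : 0 < p) (hx : 0 ≤ x) :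
    Real.Gamma p = lowerGamma p x + upperGamma p x := by
  have h1 : IntegrableOn (fun t : ℝ => t ^ (p-1) * Real.exp (-t)) (Set.Ioc 0 x) :=
    (upperGamma_integrableOn hp le_rfl).mono_set Set.Ioc_subset_Ioi_self
  have h2 := upperGamma_integrableOn hp hx
  have hu := setIntegral_union (μ := volume) (f := fun t : ℝ => t ^ (p-1) * Real.exp (-t))
    (Set.Ioc_disjoint_Ioi (le_refl x)) measurableSet_Ioi h1 h2
  rw [Set.Ioc_union_Ioi_eq_Ioi hx] at hu
  rw [Real.Gamma_eq_integral hp,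
    show (∫ t in Set.Ioi (0:ℝ), Real.exp (-t) * t ^ (p-1))
      = ∫ t in Set.Ioi (0:ℝ), t ^ (p-1) * Real.exp (-t) from
      setIntegral_congr_fun measurableSet_Ioi fun t _ => mul_comm _ _, hu]
  congr 1
  rw [lowerGamma, intervalIntegral.integral_of_le hx]

lemma upperGamma_zero {p : ℝ} (hp : 0 < p) : upperGamma p 0 = Real.Gamma p := by
  have h := gamma_split hp (le_refl (0:ℝ))
  rw [lowerGamma, intervalIntegral.integral_same] at h
  linarith


lemma key_E {a b x : ℝ} (ha : 0 < a) (hb : 0 < b) (hx : 0 ≤ x) :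
    ∀ t ∈ Set.Ioi x, (a * b * t ^ (a-1)) * Real.exp (-(b * t ^ a / b) ^ (1/a))
      = (a * b) * (t ^ (a-1) * Real.exp (-t)) := by
  intro t ht
  have ht0 : 0 < t := lt_of_le_of_lt hx ht
  rw [mul_div_cancel_left₀ _ hb.ne', ← Real.rpow_mul ht0.le, mul_one_div, div_self ha.ne',
    Real.rpow_one]
  ring

lemma key_vE {a b x : ℝ} (ha : 0 < a) (hb : 0 < b) (hx : 0 ≤ x) :
    ∀ t ∈ Set.Ioi x, (a * b * t ^ (a-1)) * ((b * t ^ a) * Real.exp (-(b * t ^ a / b) ^ (1/a)))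
      = (a * b^2) * (t ^ (2*a-1) * Real.exp (-t)) := by
  intro t ht
  have ht0 : 0 < t := lt_of_le_of_lt hx ht
  rw [mul_div_cancel_left₀ _ hb.ne', ← Real.rpow_mul ht0.le, mul_one_div, div_self ha.ne',
    Real.rpow_one, show 2*a-1 = (a-1) + a by ring, Real.rpow_add ht0]
  ring

lemma int_E {a b x : ℝ} (ha : 0 < a) (hb : 0 < b) (hx : 0 ≤ x) :
    ∫ v in Set.Ioi (b * x ^ a), Real.exp (-(v / b) ^ (1 / a))
      = a * b * upperGamma a x := by
  rw [gg_cov ha hb hx, setIntegral_congr_fun measurableSet_Ioi (key_E ha hb hx),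
    integral_const_mul, upperGamma]

lemma int_vE {a b x : ℝ} (ha : 0 < a) (hb : 0 < b) (hx : 0 ≤ x) :
    ∫ v in Set.Ioi (b * x ^ a), v * Real.exp (-(v / b) ^ (1 / a))
      = a * b^2 * upperGamma (2*a) x := by
  rw [gg_cov ha hb hx (fun v => v * Real.exp (-(v / b) ^ (1 / a))),
    setIntegral_congr_fun measurableSet_Ioi (key_vE ha hb hx),
    integral_const_mul, upperGamma]

lemma intOn_E {a b x : ℝ} (ha : 0 < a) (hb : 0 < b) (hx : 0 ≤ x) :
    IntegrableOn (fun v => Real.exp (-(v / b) ^ (1 / a))) (Set.Ioi (b * x ^ a)) := by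
  apply gg_cov_integrable ha hb hx
  exact IntegrableOn.congr_fun ((upperGamma_integrableOn ha hx).const_mul (a*b))
    (fun t ht => (key_E ha hb hx t ht).symm) measurableSet_Ioi

lemma intOn_vE {a b x : ℝ} (ha : 0 < a) (hb : 0 < b) (hx : 0 ≤ x) :
    IntegrableOn (fun v => v * Real.exp (-(v / b) ^ (1 / a))) (Set.Ioi (b * x ^ a)) := by
  apply gg_cov_integrable ha hb hx
  exact IntegrableOn.congr_fun
    ((upperGamma_integrableOn (by linarith : (0:ℝ) < 2*a) hx).const_mul (a*b^2))
    (fun t ht => (key_vE ha hb hx t ht).symm) measurableSet_Ioi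

lemma integrable_comp_abs' {f : ℝ → ℝ} (hf : IntegrableOn f (Set.Ioi 0)) :
    Integrable fun x : ℝ => f |x| := by
  have hIoi : IntegrableOn (fun x : ℝ => f |x|) (Set.Ioi 0) :=
    hf.congr_fun (fun x hx => by rw [abs_of_pos hx]) measurableSet_Ioi
  have hIic : IntegrableOn (fun x : ℝ => f |x|) (Set.Iic 0) := by
    rw [IntegrableOn, ← Measure.map_neg_eq_self (volume : Measure ℝ)]
    have m : MeasurableEmbedding fun x : ℝ => -x := (Homeomorph.neg ℝ).measurableEmbedding
    rw [← IntegrableOn, m.integrableOn_map_iff]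
    simp_rw [Function.comp_def, abs_neg, Set.neg_preimage, Set.neg_Iic, neg_zero]
    exact (integrableOn_Ici_iff_integrableOn_Ioi).mpr hIoi
  have h := hIic.union hIoi
  rwa [Set.Iic_union_Ioi, integrableOn_univ] at h

lemma continuous_E {a b : ℝ} (ha : 0 < a) (hb : 0 < b) :
    Continuous fun v : ℝ => Real.exp (-(|v| / b) ^ (1 / a)) := by
  apply Real.continuous_exp.comp
  apply Continuous.neg
  refine continuous_iff_continuousAt.mpr fun v => ?_
  exact (Real.continuousAt_rpow_const _ _ (Or.inr (by positivity))).comp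
    ((continuous_abs.div_const b).continuousAt)

lemma asymLoss_decomp (k₁ k₂ w : ℝ) :
    (if 0 ≤ w then k₁ * w else -k₂ * w) = (k₁ + k₂)/2 * |w| + (k₁ - k₂)/2 * w := by
  split_ifs with h
  · rw [abs_of_nonneg h]; ring
  · rw [abs_of_neg (lt_of_not_ge h)]; ring


lemma main_nonneg (a b k₁ k₂ : ℝ) (ha : 0 < a) (hb : 0 < b)
    (hk : 0 < k₁ + k₂) (C : ℝ) (hC0 : 0 ≤ C)
    (hC : lowerGamma a ((C / b) ^ (1 / a)) = ((k₂ - k₁) / (k₁ + k₂)) * Real.Gamma a) :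
    ∫ z, asymLoss k₁ k₂ (z + C) * genGauss a b z =
      (k₁ + k₂) * b / (2 * Real.Gamma a) * upperGamma (2 * a) ((C / b) ^ (1 / a)) := by
  have hΓ : 0 < Real.Gamma a := Real.Gamma_pos_of_pos ha
  have h2a : (0:ℝ) < 2 * a := by linarith
  set x : ℝ := (C / b) ^ (1 / a) with hxdef
  have hx0 : 0 ≤ x := Real.rpow_nonneg (div_nonneg hC0 hb.le) _
  have hbx : b * x ^ a = C := by
    rw [hxdef, ← Real.rpow_mul (div_nonneg hC0 hb.le), one_div_mul_cancel ha.ne',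
      Real.rpow_one, mul_comm, div_mul_cancel₀ _ hb.ne']
  set N : ℝ := 2 * a * b * Real.Gamma a with hNdef
  have hN : 0 < N := by positivity
  set E : ℝ → ℝ := fun v => Real.exp (-(v / b) ^ (1 / a)) with hEdef
  have hEpos : ∀ v, 0 < E v := fun v => Real.exp_pos _
  have hg_eq : ∀ z, genGauss a b z = N⁻¹ * E |z| := fun z => by
    rw [genGauss, abs_div, abs_of_pos hb]
  have hg_nonneg : ∀ z, 0 ≤ genGauss a b z := fun z => by
    rw [hg_eq]; positivity
  have hg_cont : Continuous (genGauss a b) := by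
    have h1 : genGauss a b = fun z => N⁻¹ * Real.exp (-(|z| / b) ^ (1 / a)) := funext hg_eq
    rw [h1]
    exact continuous_const.mul (continuous_E ha hb)
  -- integrability on Ioi 0 and Ioi C
  have hIE0 : IntegrableOn E (Set.Ioi (0:ℝ)) := by
    have h := intOn_E ha hb (le_refl (0:ℝ))
    rwa [Real.zero_rpow ha.ne', mul_zero] at h
  have hIE1 : IntegrableOn (fun v => v * E v) (Set.Ioi (0:ℝ)) := by
    have h := intOn_vE ha hb (le_refl (0:ℝ))
    rwa [Real.zero_rpow ha.ne', mul_zero] at h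
  have hIEC : IntegrableOn E (Set.Ioi C) := by
    have h := intOn_E ha hb hx0; rwa [hbx] at h
  have hIEC1 : IntegrableOn (fun v => v * E v) (Set.Ioi C) := by
    have h := intOn_vE ha hb hx0; rwa [hbx] at h
  -- values
  have hV0 : ∫ v in Set.Ioi (0:ℝ), E v = a * b * Real.Gamma a := by
    have h := int_E ha hb (le_refl (0:ℝ))
    rwa [Real.zero_rpow ha.ne', mul_zero, upperGamma_zero ha] at h
  have hV1 : ∫ v in Set.Ioi (0:ℝ), v * E v = a * b^2 * Real.Gamma (2*a) := by
    have h := int_vE ha hb (le_refl (0:ℝ))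
    rwa [Real.zero_rpow ha.ne', mul_zero, upperGamma_zero h2a] at h
  have hV0C : ∫ v in Set.Ioi C, E v = a * b * upperGamma a x := by
    have h := int_E ha hb hx0; rwa [hbx] at h
  have hV1C : ∫ v in Set.Ioi C, v * E v = a * b^2 * upperGamma (2*a) x := by
    have h := int_vE ha hb hx0; rwa [hbx] at h
  -- dominator
  have hDom : Integrable (fun z : ℝ => N⁻¹ * ((|z| + C) * E |z|)) := by
    apply integrable_comp_abs' (f := fun v => N⁻¹ * ((v + C) * E v))
    refine IntegrableOn.congr_fun ((hIE1.add (hIE0.const_mul C)).const_mul N⁻¹)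
      (fun v _ => by simp only [Pi.add_apply]; ring) measurableSet_Ioi
  have hIntg : Integrable (genGauss a b) := by
    have h := integrable_comp_abs' (f := fun v => N⁻¹ * E v) (hIE0.const_mul N⁻¹)
    exact h.congr (Eventually.of_forall fun z => (hg_eq z).symm)
  have hInt1 : Integrable (fun z : ℝ => (z + C) * genGauss a b z) := by
    refine hDom.mono' (((continuous_id.add continuous_const).mul hg_cont).aestronglyMeasurable)
      (Eventually.of_forall fun z => ?_)
    rw [norm_mul, Real.norm_eq_abs, Real.norm_eq_abs, abs_of_nonneg (hg_nonneg z), hg_eq]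
    have h1 : |z + C| ≤ |z| + C := by
      have h := abs_add_le z C; rwa [abs_of_nonneg hC0] at h
    calc |z + C| * (N⁻¹ * E |z|) ≤ (|z| + C) * (N⁻¹ * E |z|) :=
          mul_le_mul_of_nonneg_right h1 (by positivity)
      _ = N⁻¹ * ((|z| + C) * E |z|) := by ring
  have hIntAbs : Integrable (fun z : ℝ => |z + C| * genGauss a b z) := by
    refine hInt1.abs.congr (Eventually.of_forall fun z => ?_)
    show |(z + C) * genGauss a b z| = |z + C| * genGauss a b z
    rw [abs_mul, abs_of_nonneg (hg_nonneg z)]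
  have hIntz : Integrable (fun z : ℝ => z * genGauss a b z) := by
    refine (hInt1.sub (hIntg.const_mul C)).congr (Eventually.of_forall fun z => ?_)
    simp only [Pi.sub_apply]; ring
  -- step A
  have hsplit : (fun z : ℝ => asymLoss k₁ k₂ (z + C) * genGauss a b z)
      = fun z => (k₁ + k₂)/2 * (|z + C| * genGauss a b z)
          + (k₁ - k₂)/2 * ((z + C) * genGauss a b z) := by
    funext z
    rw [asymLoss, asymLoss_decomp]; ring
  rw [hsplit, integral_add (hIntAbs.const_mul _) (hInt1.const_mul _),
    integral_const_mul, integral_const_mul]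
  -- step B : second integral = C
  have hodd : ∫ z : ℝ, z * genGauss a b z = 0 := by
    have h1 := integral_neg_eq_self (fun z : ℝ => z * genGauss a b z) (volume : Measure ℝ)
    have h2 : ∀ z : ℝ, -z * genGauss a b (-z) = -(z * genGauss a b z) := fun z => by
      rw [hg_eq, hg_eq, abs_neg]; ring
    simp only [h2, integral_neg] at h1
    linarith
  have hone : ∫ z : ℝ, genGauss a b z = 1 := by
    have h1 : ∫ z : ℝ, genGauss a b z = ∫ z : ℝ, (fun v => N⁻¹ * E v) |z| := by
      congr 1; funext z; exact hg_eq z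
    rw [h1, _root_.integral_comp_abs (f := fun v => N⁻¹ * E v), integral_const_mul, hV0,
      hNdef]
    field_simp
  have hJ2 : ∫ z : ℝ, (z + C) * genGauss a b z = C := by
    have h1 : (fun z : ℝ => (z + C) * genGauss a b z)
        = fun z => z * genGauss a b z + C * genGauss a b z := funext fun z => by ring
    rw [h1, integral_add hIntz (hIntg.const_mul C), hodd, integral_const_mul, hone]; ring
  rw [hJ2]
  -- step C : first integral
  -- translation helper
  have hpre : (fun w : ℝ => w + C) ⁻¹' Set.Ioi C = Set.Ioi (0:ℝ) := by
    ext w; simp only [Set.mem_preimage, Set.mem_Ioi]; constructor <;> intro h <;> linarith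
  have htrans : ∀ g : ℝ → ℝ, ∫ w in Set.Ioi C, g w = ∫ w in Set.Ioi (0:ℝ), g (w + C) := by
    intro g
    have h := (measurePreserving_add_right (volume : Measure ℝ) C).setIntegral_preimage_emb
      (measurableEmbedding_addRight C) g (Set.Ioi C)
    rw [hpre] at h
    exact h.symm
  have hJ1 : ∫ z : ℝ, |z + C| * genGauss a b z
      = N⁻¹ * (2 * (a * b^2 * upperGamma (2*a) x) - 2*C*(a*b*upperGamma a x)
          + 2*C*(a*b*Real.Gamma a)) := by
    have hshift : ∫ z : ℝ, |z + C| * genGauss a b z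
        = ∫ w : ℝ, |w| * genGauss a b (w - C) := by
      have h := integral_add_right_eq_self (μ := volume)
        (fun w : ℝ => |w| * genGauss a b (w - C)) C
      rw [← h]; congr 1; funext z; rw [add_sub_cancel_right]
    rw [hshift]
    have hIntw : Integrable (fun w : ℝ => |w| * genGauss a b (w - C)) := by
      refine (hIntAbs.comp_sub_right C).congr (Eventually.of_forall fun w => ?_)
      dsimp only; rw [sub_add_cancel]
    rw [← intervalIntegral.integral_Iic_add_Ioi (hIntw.integrableOn) (hIntw.integrableOn)]
    -- left piece
    have hleft : ∫ w in Set.Iic (0:ℝ), |w| * genGauss a b (w - C)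
        = N⁻¹ * (a * b^2 * upperGamma (2*a) x) - C * (N⁻¹ * (a * b * upperGamma a x)) := by
      have h0 := integral_comp_neg_Iic (0:ℝ) (fun w : ℝ => |(-w)| * genGauss a b (-w - C))
      simp only [neg_neg, neg_zero] at h0
      rw [h0]
      have h1 : ∫ w in Set.Ioi (0:ℝ), |(-w)| * genGauss a b (-w - C)
          = ∫ w in Set.Ioi (0:ℝ), (fun v => (v - C) * (N⁻¹ * E v)) (w + C) := by
        refine setIntegral_congr_fun measurableSet_Ioi fun w hw => ?_
        have hw0 : (0:ℝ) < w := hw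
        dsimp only
        rw [abs_neg, abs_of_pos hw0, hg_eq, show -w - C = -(w + C) by ring, abs_neg,
          abs_of_pos (by linarith), add_sub_cancel_right]
      rw [h1, ← htrans (fun v => (v - C) * (N⁻¹ * E v))]
      have h2 : ∀ v ∈ Set.Ioi C, (v - C) * (N⁻¹ * E v)
          = N⁻¹ * (v * E v) - (C * N⁻¹) * E v := fun v _ => by ring
      rw [setIntegral_congr_fun measurableSet_Ioi h2,
        integral_sub (hIEC1.const_mul N⁻¹) (hIEC.const_mul (C * N⁻¹)),
        integral_const_mul, integral_const_mul, hV1C, hV0C]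
      ring
    -- right piece
    have hIw : IntegrableOn (fun w : ℝ => w * genGauss a b (w - C)) (Set.Ioi (0:ℝ)) := by
      refine IntegrableOn.congr_fun hIntw.integrableOn
        (fun w hw => by rw [abs_of_pos hw]) measurableSet_Ioi
    have hR0 : ∫ w in Set.Ioi (0:ℝ), |w| * genGauss a b (w - C)
        = ∫ w in Set.Ioi (0:ℝ), w * genGauss a b (w - C) :=
      setIntegral_congr_fun measurableSet_Ioi fun w hw => by
        rw [abs_of_pos hw]
    have hsplit2 : ∫ w in Set.Ioi (0:ℝ), w * genGauss a b (w - C)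
        = (∫ w in Set.Ioc (0:ℝ) C, w * genGauss a b (w - C))
          + ∫ w in Set.Ioi C, w * genGauss a b (w - C) := by
      rw [← setIntegral_union (Set.Ioc_disjoint_Ioi (le_refl C)) measurableSet_Ioi
        (hIw.mono_set Set.Ioc_subset_Ioi_self) (hIw.mono_set (Set.Ioi_subset_Ioi hC0)),
        Set.Ioc_union_Ioi_eq_Ioi hC0]
    have hP2b : ∫ w in Set.Ioi C, w * genGauss a b (w - C)
        = N⁻¹ * (a * b^2 * Real.Gamma (2*a)) + C * (N⁻¹ * (a * b * Real.Gamma a)) := by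
      rw [htrans (fun w => w * genGauss a b (w - C))]
      have h1 : ∀ w ∈ Set.Ioi (0:ℝ), (w + C) * genGauss a b (w + C - C)
          = N⁻¹ * (w * E w) + (C * N⁻¹) * E w := by
        intro w hw
        have hw0 : (0:ℝ) < w := hw
        rw [add_sub_cancel_right, hg_eq, abs_of_pos hw0]; ring
      rw [setIntegral_congr_fun measurableSet_Ioi h1,
        integral_add (hIE1.const_mul N⁻¹) (hIE0.const_mul (C * N⁻¹)),
        integral_const_mul, integral_const_mul, hV1, hV0]
      ring
    have hIoc0 : ∫ v in Set.Ioc (0:ℝ) C, E v = a*b*Real.Gamma a - a*b*upperGamma a x := by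
      have h := setIntegral_union (μ := volume) (f := E)
        (Set.Ioc_disjoint_Ioi (le_refl C)) measurableSet_Ioi
        (hIE0.mono_set Set.Ioc_subset_Ioi_self) hIEC
      rw [Set.Ioc_union_Ioi_eq_Ioi hC0, hV0, hV0C] at h
      linarith
    have hIoc1 : ∫ v in Set.Ioc (0:ℝ) C, v * E v
        = a*b^2*Real.Gamma (2*a) - a*b^2*upperGamma (2*a) x := by
      have h := setIntegral_union (μ := volume) (f := fun v => v * E v)
        (Set.Ioc_disjoint_Ioi (le_refl C)) measurableSet_Ioi
        (hIE1.mono_set Set.Ioc_subset_Ioi_self) hIEC1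
      rw [Set.Ioc_union_Ioi_eq_Ioi hC0, hV1, hV1C] at h
      linarith
    have hP2a : ∫ w in Set.Ioc (0:ℝ) C, w * genGauss a b (w - C)
        = C * (N⁻¹ * (a*b*Real.Gamma a)) - C * (N⁻¹*(a*b*upperGamma a x))
          - (N⁻¹ * (a*b^2*Real.Gamma (2*a)) - N⁻¹*(a*b^2*upperGamma (2*a) x)) := by
      have e1 : ∫ w in Set.Ioc (0:ℝ) C, w * genGauss a b (w - C)
          = ∫ w in (0:ℝ)..C, w * genGauss a b (w - C) :=
        (intervalIntegral.integral_of_le hC0).symm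
      have e2 : ∫ w in (0:ℝ)..C, w * genGauss a b (w - C)
          = ∫ v in (0:ℝ)..C, (C - v) * genGauss a b (-v) := by
        have h := intervalIntegral.integral_comp_sub_left (a := 0) (b := C)
          (fun v => (C - v) * genGauss a b (-v)) C
        simp only [sub_sub_cancel, sub_zero, sub_self] at h
        rw [← h]
        congr 1; funext w; rw [show -(C - w) = w - C by ring]
      rw [e1, e2, intervalIntegral.integral_of_le hC0]
      have e3 : ∀ v ∈ Set.Ioc (0:ℝ) C, (C - v) * genGauss a b (-v)
          = (C * N⁻¹) * E v - N⁻¹ * (v * E v) := by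
        intro v hv
        rw [hg_eq, abs_neg, abs_of_pos hv.1]; ring
      rw [setIntegral_congr_fun measurableSet_Ioc e3,
        integral_sub ((hIE0.mono_set Set.Ioc_subset_Ioi_self).const_mul _)
          ((hIE1.mono_set Set.Ioc_subset_Ioi_self).const_mul _),
        integral_const_mul, integral_const_mul, hIoc0, hIoc1]
      ring
    rw [hleft, hR0, hsplit2, hP2a, hP2b]
    ring
  rw [hJ1]
  -- final algebra
  have hug : upperGamma a x = Real.Gamma a - (k₂ - k₁)/(k₁+k₂) * Real.Gamma a := by
    have h := gamma_split ha hx0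
    rw [hC] at h
    linarith
  rw [hug, hNdef]
  have hkne : k₁ + k₂ ≠ 0 := hk.ne'
  field_simp
  ring


lemma asymLoss_neg (k₁ k₂ w : ℝ) : asymLoss k₂ k₁ (-w) = asymLoss k₁ k₂ w := by
  rw [asymLoss, asymLoss]
  rcases lt_trichotomy w 0 with h | rfl | h
  · rw [if_pos (by linarith), if_neg (not_le.mpr h)]; ring
  · norm_num
  · rw [if_neg (by simpa using h), if_pos h.le]; ring

lemma genGauss_even (a b z : ℝ) : genGauss a b (-z) = genGauss a b z := by
  rw [genGauss, genGauss, neg_div, abs_neg]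

theorem minimized_expected_loss (a b k₁ k₂ : ℝ) (ha : 0 < a) (hb : 0 < b)
    (hk₁ : 0 < k₁) (hk₂ : 0 < k₂) (C : ℝ)
    (hC : lowerGamma a (|C / b| ^ (1 / a)) = Sgn C * ((k₂ - k₁) / (k₁ + k₂)) * Real.Gamma a) :
    ∫ z, asymLoss k₁ k₂ (z + C) * genGauss a b z =
      (k₁ + k₂) * b / (2 * Real.Gamma a) * upperGamma (2 * a) (|C / b| ^ (1 / a)) := by
  have hk : 0 < k₁ + k₂ := by linarith
  rcases le_or_gt 0 C with h | h
  · have habs : |C / b| = C / b := abs_of_nonneg (div_nonneg h hb.le)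
    rw [habs] at hC ⊢
    rw [Sgn, if_pos h, one_mul] at hC
    exact main_nonneg a b k₁ k₂ ha hb hk C h hC
  · have habs : |C / b| = -C / b := by
      rw [abs_div, abs_of_neg h, abs_of_pos hb, neg_div]
    rw [habs] at hC ⊢
    rw [Sgn, if_neg (not_le.mpr h)] at hC
    have hC' : lowerGamma a ((-C / b) ^ (1/a)) = ((k₁ - k₂) / (k₂ + k₁)) * Real.Gamma a := by
      rw [hC]; ring_nf
    have key := main_nonneg a b k₂ k₁ ha hb (by linarith) (-C) (by linarith) hC'
    have hLHS : ∫ z, asymLoss k₂ k₁ (z + -C) * genGauss a b z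
        = ∫ z, asymLoss k₁ k₂ (z + C) * genGauss a b z := by
      rw [← integral_neg_eq_self (fun z : ℝ => asymLoss k₂ k₁ (z + -C) * genGauss a b z)
        (volume : Measure ℝ)]
      congr 1; funext z
      show asymLoss k₂ k₁ (-z + -C) * genGauss a b (-z) = asymLoss k₁ k₂ (z + C) * genGauss a b z
      rw [genGauss_even, show -z + -C = -(z + C) by ring, asymLoss_neg]
    rw [← hLHS, key]
    ring
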